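/- Fix n ≥ 3 and let φ : ℝ^{n+1} → ℝ^{2n−1} be the coefficient map of the n-compartment cycle model, sending the parameter vector (a_{01}, a_{21}, a_{32}, …, a_{n,n−1}, a_{1n}) to (c_0, …, c_{n−1}, d_0, …, d_{n−2}). Then for every point p ∈ ℝ^{n+1}, the Jacobian matrix of φ evaluated at p has rank n+1 if and only if the value at p of a_{32}a_{43}⋯a_{n,n−1}a_{1n} · ∏_{2 ≤ i < j ≤ n} (a_{i+1,i} − a_{j+1,j}) is nonzero, where a_{n+1,n} denotes a_{1n}. In particular, the cycle model is generically locally identifiable and its singular locus is the vanishing set of this polynomial. -/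

import Mathlib

open MvPolynomial

/-- Index `i : Fin (m+3)` recast in `Fin (m+2)` as `i - 1`. -/
def subOne' {m : ℕ} (i : Fin (m + 3)) : Fin (m + 2) :=
  ⟨i.val - 1, by have := i.isLt; omega⟩

/-- The cycle compartmental matrix with `n = m + 3` compartments. -/
def cycMatrix {R : Type*} [CommRing R] (m : ℕ) (a01 a21 : R) (b : Fin (m + 2) → R) :
    Matrix (Fin (m + 3)) (Fin (m + 3)) R :=
  Matrix.of fun i j =>
    if i = 0 ∧ j = 0 then -a01 - a21
    else if i = 0 ∧ j.val = m + 2 then b (Fin.last (m + 1))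
    else if i.val = j.val + 1 then (if j = 0 then a21 else b (subOne' j))
    else if i = j then -(b (subOne' i))
    else 0

/-- Index type for the `n + 1` parameters of the cycle model (`n = m + 3`):
`.inl 0 ↦ a₀₁`, `.inl 1 ↦ a₂₁`, `.inr k ↦ a_{k+3,k+2}` (with `.inr (m+1) ↦ a_{1n}`). -/
abbrev CycIx (m : ℕ) := Fin 2 ⊕ Fin (m + 2)

/-- The cycle compartmental matrix with the parameters as indeterminates. -/
noncomputable def cycA (m : ℕ) :
    Matrix (Fin (m + 3)) (Fin (m + 3)) (MvPolynomial (CycIx m) ℝ) :=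
  cycMatrix m (X (Sum.inl 0)) (X (Sum.inl 1)) (fun k => X (Sum.inr k))

/-- All `2n - 1` coefficients of the cycle model: `.inl i ↦ c_i`, `.inr i ↦ d_i`,
where `c_i` is the coefficient of `λ^i` in `det (λI - A)` and `d_i` that in
`det (λI - A₁₁)`. -/
noncomputable def cycCoeff (m : ℕ) : Fin (m + 3) ⊕ Fin (m + 2) → MvPolynomial (CycIx m) ℝ :=
  Sum.elim (fun i => (cycA m).charpoly.coeff i.val)
    (fun i => ((cycA m).submatrix Fin.succ Fin.succ).charpoly.coeff i.val)

/-- The coefficient map `φ : ℝ^{n+1} → ℝ^{2n-1}` of the cycle model. -/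
noncomputable def cycPhi (m : ℕ) (p : CycIx m → ℝ) : Fin (m + 3) ⊕ Fin (m + 2) → ℝ :=
  fun s => MvPolynomial.eval p (cycCoeff m s)

/-- The `(2n-1) × (n+1)` Jacobian matrix of `φ` evaluated at the point `p`. -/
noncomputable def cycJacAt (m : ℕ) (p : CycIx m → ℝ) :
    Matrix (Fin (m + 3) ⊕ Fin (m + 2)) (CycIx m) ℝ :=
  Matrix.of fun s t => MvPolynomial.eval p (MvPolynomial.pderiv t (cycCoeff m s))

@[simp] lemma subOne'_succ {m : ℕ} (j : Fin (m + 2)) : subOne' j.succ = j := by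
  ext; simp [subOne']

section CP
variable {R : Type*} [CommRing R] (m : ℕ) (a01 a21 : R) (b : Fin (m + 2) → R)

lemma cyc_sub_entry (i j : Fin (m + 2)) :
    (cycMatrix m a01 a21 b).submatrix Fin.succ Fin.succ i j
      = if i.val = j.val + 1 then b j
        else if i = j then -(b i) else 0 := by
  simp only [Matrix.submatrix_apply, cycMatrix, Matrix.of_apply, Fin.val_succ,
    Fin.succ_ne_zero, false_and, if_false, Fin.succ_inj, subOne'_succ]
  by_cases h : (i : ℕ) = (j : ℕ) + 1
  · rw [if_pos (by omega), if_pos h]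
  · rw [if_neg (by omega), if_neg h]

lemma cyc_sub_charpoly :
    ((cycMatrix m a01 a21 b).submatrix Fin.succ Fin.succ).charpoly
      = ∏ k : Fin (m + 2), (Polynomial.X + Polynomial.C (b k)) := by
  rw [Matrix.charpoly]
  rw [Matrix.det_of_lowerTriangular]
  · apply Finset.prod_congr rfl
    intro k _
    rw [Matrix.charmatrix_apply_eq, cyc_sub_entry]
    rw [if_neg (by omega), if_pos rfl, map_neg, sub_neg_eq_add]
  · intro i j hij
    replace hij : i < j := hij
    rw [Matrix.charmatrix_apply_ne _ _ _ (ne_of_lt hij), cyc_sub_entry]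
    rw [if_neg (by have := Fin.lt_iff_val_lt_val.mp hij; omega),
      if_neg (ne_of_lt hij), map_zero, neg_zero]

end CP

lemma charmatrix_submatrix' {n l R : Type*} [DecidableEq n] [DecidableEq l] [Fintype n]
    [Fintype l] [CommRing R] (M : Matrix n n R) (f : l → n) (hf : Function.Injective f) :
    (M.charmatrix).submatrix f f = (M.submatrix f f).charmatrix := by
  ext i j
  by_cases h : i = j
  · subst h; simp
  · rw [Matrix.submatrix_apply, Matrix.charmatrix_apply_ne _ _ _ (fun hc => h (hf hc)),
      Matrix.charmatrix_apply_ne _ _ _ h, Matrix.submatrix_apply]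

section CP2
variable {R : Type*} [CommRing R] (m : ℕ) (a01 a21 : R) (b : Fin (m + 2) → R)

lemma cyc_charpoly :
    (cycMatrix m a01 a21 b).charpoly
      = (Polynomial.X + Polynomial.C (a01 + a21))
          * ∏ k : Fin (m + 2), (Polynomial.X + Polynomial.C (b k))
        - Polynomial.C (a21 * ∏ k : Fin (m + 2), b k) := by
  set M := cycMatrix m a01 a21 b with hM
  rw [Matrix.charpoly, Matrix.det_succ_row_zero]
  have hsum : ∀ j : Fin (m + 3), j ≠ 0 → j ≠ Fin.last (m + 2) →
      (-1 : Polynomial R) ^ (j : ℕ) * M.charmatrix 0 j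
          * (M.charmatrix.submatrix Fin.succ j.succAbove).det = 0 := by
    intro j hj0 hjl
    have : M.charmatrix 0 j = 0 := by
      rw [Matrix.charmatrix_apply_ne _ _ _ (Ne.symm hj0)]
      have : M 0 j = 0 := by
        simp only [hM, cycMatrix, Matrix.of_apply]
        rw [if_neg (by simp [hj0]),
          if_neg (by rintro ⟨-, hv⟩; exact hjl (by ext; simpa using hv)),
          if_neg (by simp), if_neg (Ne.symm hj0)]
      rw [this, map_zero, neg_zero]
    rw [this, mul_zero, zero_mul]
  have h0l : (0 : Fin (m + 3)) ≠ Fin.last (m + 2) := by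
    simp [Fin.ext_iff]
  rw [← Finset.sum_subset (Finset.subset_univ ({0, Fin.last (m + 2)} : Finset (Fin (m + 3))))
      (fun j _ hj => by
        simp only [Finset.mem_insert, Finset.mem_singleton, not_or] at hj
        exact hsum j hj.1 hj.2),
    Finset.sum_pair h0l]
  -- the term at j = 0
  have t0 : (-1 : Polynomial R) ^ ((0 : Fin (m + 3)) : ℕ) * M.charmatrix 0 0
        * (M.charmatrix.submatrix Fin.succ (0 : Fin (m + 3)).succAbove).det
      = (Polynomial.X + Polynomial.C (a01 + a21))
          * ∏ k : Fin (m + 2), (Polynomial.X + Polynomial.C (b k)) := by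
    rw [Fin.succAbove_zero, charmatrix_submatrix' _ _ (Fin.succ_injective _),
      ← Matrix.charpoly, cyc_sub_charpoly]
    have hM00 : M 0 0 = -a01 - a21 := by simp [hM, cycMatrix]
    rw [Matrix.charmatrix_apply_eq, hM00, Fin.val_zero, pow_zero, one_mul,
      show -a01 - a21 = -(a01 + a21) by ring, map_neg, sub_neg_eq_add]
  -- the term at j = last
  have tl : (-1 : Polynomial R) ^ ((Fin.last (m + 2) : Fin (m + 3)) : ℕ)
        * M.charmatrix 0 (Fin.last (m + 2))
        * (M.charmatrix.submatrix Fin.succ (Fin.last (m + 2)).succAbove).det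
      = - Polynomial.C (a21 * ∏ k : Fin (m + 2), b k) := by
    have h0last : M 0 (Fin.last (m + 2)) = b (Fin.last (m + 1)) := by
      simp [hM, cycMatrix, Ne.symm h0l]
    rw [Fin.succAbove_last, Matrix.charmatrix_apply_ne _ _ _ h0l, h0last]
    have hdet : (M.charmatrix.submatrix Fin.succ Fin.castSucc).det
        = (-1 : Polynomial R) ^ (m + 2)
            * Polynomial.C (a21 * ∏ k : Fin (m + 1), b k.castSucc) := by
      rw [Matrix.det_of_upperTriangular (M := M.charmatrix.submatrix Fin.succ Fin.castSucc)]
      · have hdiag : ∀ i : Fin (m + 2),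
            (M.charmatrix.submatrix Fin.succ Fin.castSucc) i i
              = -Polynomial.C (if i = 0 then a21 else b ⟨(i : ℕ) - 1, by omega⟩) := by
          intro i
          rw [Matrix.submatrix_apply,
            Matrix.charmatrix_apply_ne _ _ _ (by simp [Fin.ext_iff])]
          congr 1
          simp only [hM, cycMatrix, Matrix.of_apply]
          rw [if_neg (by simp [Fin.succ_ne_zero]), if_neg (by simp [Fin.succ_ne_zero]),
            if_pos (by simp)]
          by_cases h : i = 0
          · subst h
            rw [if_pos (show Fin.castSucc 0 = 0 by ext; simp), if_pos rfl]
          · have hv : (i : ℕ) ≠ 0 := fun hc => h (by ext; simp [hc])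
            rw [if_neg (show ¬(Fin.castSucc i = 0) by
                simp only [Fin.ext_iff, Fin.coe_castSucc, Fin.val_zero]; omega),
              if_neg h]
            congr 2
        calc ∏ i : Fin (m + 2), (M.charmatrix.submatrix Fin.succ Fin.castSucc) i i
            = ∏ i : Fin (m + 2),
                -Polynomial.C (if i = 0 then a21 else b ⟨(i : ℕ) - 1, by omega⟩) :=
              Finset.prod_congr rfl fun i _ => hdiag i
          _ = ∏ i : Fin (m + 2), ((-1 : Polynomial R)
                * Polynomial.C (if i = 0 then a21 else b ⟨(i : ℕ) - 1, by omega⟩)) := by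
              apply Finset.prod_congr rfl
              intro i _
              rw [neg_one_mul]
          _ = (-1 : Polynomial R) ^ (m + 2)
                * Polynomial.C (∏ i : Fin (m + 2),
                    (if i = 0 then a21 else b ⟨(i : ℕ) - 1, by omega⟩)) := by
              rw [Finset.prod_mul_distrib, Finset.prod_const, Finset.card_univ,
                Fintype.card_fin, map_prod]
          _ = _ := by
              congr 1
              rw [Fin.prod_univ_succ, if_pos rfl]
              congr 1
      · intro i j hij
        have hij' : (j : ℕ) < (i : ℕ) := hij
        rw [Matrix.submatrix_apply,
          Matrix.charmatrix_apply_ne _ _ _ (by simp [Fin.ext_iff]; omega)]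
        have : M i.succ j.castSucc = 0 := by
          simp only [hM, cycMatrix, Matrix.of_apply]
          rw [if_neg (by simp [Fin.succ_ne_zero]), if_neg (by simp [Fin.succ_ne_zero]),
            if_neg (by simp [Fin.ext_iff]; omega), if_neg (by simp [Fin.ext_iff]; omega)]
        rw [this, map_zero, neg_zero]
    rw [hdet, Fin.val_last]
    have hsq : (-1 : Polynomial R) ^ (m + 2) * ((-1 : Polynomial R) ^ (m + 2)) = 1 := by
      rw [← mul_pow]; norm_num
    rw [show ∏ k : Fin (m + 2), b k = (∏ k : Fin (m + 1), b k.castSucc) * b (Fin.last (m + 1))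
      from Fin.prod_univ_castSucc b]
    rw [mul_comm ((-1 : Polynomial R) ^ (m + 2)) (-Polynomial.C (b (Fin.last (m + 1)))),
      mul_assoc, ← mul_assoc ((-1 : Polynomial R) ^ (m + 2)), hsq, one_mul,
      map_mul, map_mul, map_mul]
    ring
  rw [t0, tl]
  ring

end CP2

section PD
variable {σ : Type*} [DecidableEq σ]

lemma pderiv_coeff_prod {κ : Type*} [DecidableEq κ] (u : σ) (S : Finset κ)
    (B : κ → MvPolynomial σ ℝ) (i : ℕ) :
    pderiv u ((∏ k ∈ S, (Polynomial.X + Polynomial.C (B k))).coeff i)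
      = ∑ k ∈ S, pderiv u (B k)
          * (∏ j ∈ S.erase k, (Polynomial.X + Polynomial.C (B j))).coeff i := by
  induction S using Finset.induction generalizing i with
  | empty =>
    simp only [Finset.prod_empty, Polynomial.coeff_one, Finset.sum_empty]
    split <;> simp
  | @insert a S ha ih =>
    rw [Finset.prod_insert ha, Finset.sum_insert ha, Finset.erase_insert ha]
    have hrest : ∀ i : ℕ, (∑ k ∈ S, pderiv u (B k)
          * (∏ j ∈ (insert a S).erase k, (Polynomial.X + Polynomial.C (B j))).coeff i)
        = ∑ k ∈ S, pderiv u (B k)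
          * ((Polynomial.X + Polynomial.C (B a))
              * ∏ j ∈ S.erase k, (Polynomial.X + Polynomial.C (B j))).coeff i := by
      intro i
      apply Finset.sum_congr rfl
      intro k hk
      rw [Finset.erase_insert_of_ne (fun h : a = k => ha (h ▸ hk)),
        Finset.prod_insert (fun h => ha (Finset.mem_of_mem_erase h))]
    rw [hrest]
    cases i with
    | zero =>
      have hzero : ∀ G : Polynomial (MvPolynomial σ ℝ),
          ((Polynomial.X + Polynomial.C (B a)) * G).coeff 0 = B a * G.coeff 0 := by
        intro G
        rw [Polynomial.mul_coeff_zero, Polynomial.coeff_add, Polynomial.coeff_X_zero,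
          Polynomial.coeff_C_zero, zero_add]
      simp only [hzero]
      rw [pderiv_mul, ih 0, Finset.mul_sum]
      congr 1
      apply Finset.sum_congr rfl
      intro k _
      ring
    | succ i =>
      have hsucc : ∀ G : Polynomial (MvPolynomial σ ℝ),
          ((Polynomial.X + Polynomial.C (B a)) * G).coeff (i + 1)
            = G.coeff i + B a * G.coeff (i + 1) := by
        intro G
        rw [add_mul, Polynomial.coeff_add, Polynomial.coeff_X_mul, Polynomial.coeff_C_mul]
      simp only [hsucc]
      rw [map_add, pderiv_mul, ih i, ih (i + 1), Finset.mul_sum]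
      have hswap := Finset.sum_congr rfl (fun k (_ : k ∈ S) =>
        mul_left_comm (B a) (pderiv u (B k))
          ((∏ j ∈ S.erase k, (Polynomial.X + Polynomial.C (B j))).coeff (i + 1)))
      rw [hswap]
      simp only [mul_add, Finset.sum_add_distrib]
      ring
end PD

-- ℝ-level data
noncomputable def fR (m : ℕ) (p : CycIx m → ℝ) : Polynomial ℝ :=
  ∏ k : Fin (m + 2), (Polynomial.X + Polynomial.C (p (Sum.inr k)))

noncomputable def gR (m : ℕ) (p : CycIx m → ℝ) (k : Fin (m + 2)) : Polynomial ℝ :=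
  ∏ j ∈ Finset.univ.erase k, (Polynomial.X + Polynomial.C (p (Sum.inr j)))

section Helpers
variable {A : Type*} [CommRing A] [IsDomain A]

lemma XC_ne_zero (c : A) : Polynomial.X + Polynomial.C c ≠ 0 := by
  intro h
  have := congrArg (Polynomial.coeff · 1) h
  simp [Polynomial.coeff_X_one] at this

lemma prod_erase_none_XC {κ : Type*} [Fintype κ] [DecidableEq κ] (γ : Option κ → A) :
    (∏ o ∈ (Finset.univ : Finset (Option κ)).erase none, (Polynomial.X + Polynomial.C (γ o)))
      = ∏ k : κ, (Polynomial.X + Polynomial.C (γ (some k))) := by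
  apply mul_right_cancel₀ (XC_ne_zero (γ none))
  rw [Finset.prod_erase_mul _ _ (Finset.mem_univ none), Fintype.prod_option, mul_comm]

lemma prod_erase_some_XC {κ : Type*} [Fintype κ] [DecidableEq κ] (γ : Option κ → A) (k : κ) :
    (∏ o ∈ (Finset.univ : Finset (Option κ)).erase (some k),
        (Polynomial.X + Polynomial.C (γ o)))
      = (Polynomial.X + Polynomial.C (γ none))
          * ∏ j ∈ Finset.univ.erase k, (Polynomial.X + Polynomial.C (γ (some j))) := by
  apply mul_right_cancel₀ (XC_ne_zero (γ (some k)))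
  rw [Finset.prod_erase_mul _ _ (Finset.mem_univ (some k)), Fintype.prod_option, mul_assoc,
    Finset.prod_erase_mul _ _ (Finset.mem_univ k)]

lemma coeff_zero_prod_XC {κ : Type*} (S : Finset κ) (B : κ → A) :
    (∏ k ∈ S, (Polynomial.X + Polynomial.C (B k))).coeff 0 = ∏ k ∈ S, B k := by
  simp [Polynomial.coeff_zero_eq_eval_zero, Polynomial.eval_prod]

end Helpers

section Entries
variable (m : ℕ) (p : CycIx m → ℝ)

lemma map_prod_XC {κ : Type*} (S : Finset κ) (B : κ → MvPolynomial (CycIx m) ℝ) :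
    (∏ j ∈ S, (Polynomial.X + Polynomial.C (B j))).map (MvPolynomial.eval p)
      = ∏ j ∈ S, (Polynomial.X + Polynomial.C (eval p (B j))) := by
  rw [← Polynomial.coe_mapRingHom, map_prod]
  apply Finset.prod_congr rfl
  intro j _
  simp

lemma eval_coeff (Q : Polynomial (MvPolynomial (CycIx m) ℝ)) (i : ℕ) :
    eval p (Q.coeff i) = (Q.map (MvPolynomial.eval p)).coeff i :=
  (Polynomial.coeff_map _ _).symm

lemma J_d (i : Fin (m + 2)) (t : CycIx m) :
    cycJacAt m p (Sum.inr i) t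
      = Sum.elim (fun _ => (0 : ℝ)) (fun k => (gR m p k).coeff i.val) t := by
  have hsub : cycCoeff m (Sum.inr i)
      = (∏ k : Fin (m + 2),
          (Polynomial.X + Polynomial.C (X (Sum.inr k) : MvPolynomial (CycIx m) ℝ))).coeff i.val := by
    show ((cycA m).submatrix Fin.succ Fin.succ).charpoly.coeff i.val = _
    rw [show cycA m = cycMatrix m (X (Sum.inl 0)) (X (Sum.inl 1)) (fun k => X (Sum.inr k))
        from rfl, cyc_sub_charpoly]
  show eval p (pderiv t (cycCoeff m (Sum.inr i))) = _
  rw [hsub, pderiv_coeff_prod]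
  cases t with
  | inl s =>
    simp
  | inr k =>
    rw [Finset.sum_eq_single k (fun j _ hjk => by
        rw [pderiv_X_of_ne (by simpa using hjk), zero_mul])
      (fun h => absurd (Finset.mem_univ k) h)]
    rw [pderiv_X_self, one_mul, eval_coeff, map_prod_XC]
    simp [gR]

lemma J_c (i : Fin (m + 3)) (t : CycIx m) :
    cycJacAt m p (Sum.inl i) t
      = Sum.elim
          (fun s : Fin 2 => (fR m p).coeff i.val
            - if (s : ℕ) = 1 then (if (i : ℕ) = 0 then (fR m p).coeff 0 else 0) else 0)
          (fun k => ((Polynomial.X + Polynomial.C (p (Sum.inl 0) + p (Sum.inl 1)))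
              * gR m p k).coeff i.val
            - (if (i : ℕ) = 0 then p (Sum.inl 1) * (gR m p k).coeff 0 else 0)) t := by
  classical
  set β : Option (Fin (m + 2)) → MvPolynomial (CycIx m) ℝ :=
    fun o => o.elim (X (Sum.inl 0) + X (Sum.inl 1)) (fun k => X (Sum.inr k)) with hβ
  have hfull : cycCoeff m (Sum.inl i)
      = (∏ o : Option (Fin (m + 2)), (Polynomial.X + Polynomial.C (β o))).coeff i.val
        - (if (i : ℕ) = 0
            then (X (Sum.inl 1) : MvPolynomial (CycIx m) ℝ) * ∏ k : Fin (m + 2), X (Sum.inr k)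
            else 0) := by
    show (cycA m).charpoly.coeff i.val = _
    rw [show cycA m = cycMatrix m (X (Sum.inl 0)) (X (Sum.inl 1)) (fun k => X (Sum.inr k))
        from rfl,
      cyc_charpoly, Polynomial.coeff_sub, Polynomial.coeff_C, Fintype.prod_option]
    simp only [hβ, Option.elim, map_add]
  -- derivative of the variable product
  have hprodX : ∀ t : CycIx m,
      pderiv t (∏ k : Fin (m + 2), (X (Sum.inr k) : MvPolynomial (CycIx m) ℝ))
        = Sum.elim (fun _ : Fin 2 => (0 : MvPolynomial (CycIx m) ℝ))
            (fun k0 => ∏ j ∈ Finset.univ.erase k0, (X (Sum.inr j) : MvPolynomial (CycIx m) ℝ)) t := by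
    intro t
    rw [← coeff_zero_prod_XC Finset.univ (fun k : Fin (m + 2) => (X (Sum.inr k) : MvPolynomial (CycIx m) ℝ)),
      pderiv_coeff_prod]
    cases t with
    | inl s =>
      simp
    | inr k0 =>
      rw [Finset.sum_eq_single k0 (fun j _ hjk => by
          rw [pderiv_X_of_ne (by simpa using hjk), zero_mul])
        (fun h => absurd (Finset.mem_univ k0) h)]
      rw [pderiv_X_self, one_mul, coeff_zero_prod_XC]
      simp
  show eval p (pderiv t (cycCoeff m (Sum.inl i))) = _
  rw [hfull, map_sub, map_sub, pderiv_coeff_prod]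
  have hg0 : ∀ k0 : Fin (m + 2), (gR m p k0).coeff 0 = ∏ j ∈ Finset.univ.erase k0, p (Sum.inr j) :=
    fun k0 => coeff_zero_prod_XC _ _
  cases t with
  | inl s =>
    have hcol : (∑ o : Option (Fin (m + 2)), pderiv (Sum.inl s) (β o)
          * (∏ o' ∈ Finset.univ.erase o, (Polynomial.X + Polynomial.C (β o'))).coeff i.val)
        = (∏ o' ∈ Finset.univ.erase (none : Option (Fin (m + 2))),
            (Polynomial.X + Polynomial.C (β o'))).coeff i.val := by
      rw [Finset.sum_eq_single (none : Option (Fin (m + 2)))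
        (fun o _ ho => ?_) (fun h => absurd (Finset.mem_univ _) h)]
      · have : pderiv (Sum.inl s) (β none) = 1 := by
          have hs : s = 0 ∨ s = 1 := by omega
          rcases hs with hs | hs <;> subst hs <;> simp [hβ, Pi.single_apply]
        rw [this, one_mul]
      · obtain ⟨k, rfl⟩ := Option.ne_none_iff_exists'.mp ho
        rw [show pderiv (Sum.inl s) (β (some k)) = 0 from pderiv_X_of_ne (by simp), zero_mul]
    rw [hcol, eval_coeff, map_prod_XC,
      prod_erase_none_XC (fun o => eval p (β o))]
    have hfRmatch : (∏ k : Fin (m + 2),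
        (Polynomial.X + Polynomial.C (eval p (β (some k))))) = fR m p := by
      apply Finset.prod_congr rfl
      intro k _
      simp [hβ, fR]
    rw [hfRmatch]
    have hterm2 : eval p (pderiv (Sum.inl s)
        (if (i : ℕ) = 0
          then (X (Sum.inl 1) : MvPolynomial (CycIx m) ℝ) * ∏ k : Fin (m + 2), X (Sum.inr k)
          else 0))
        = if (s : ℕ) = 1 then (if (i : ℕ) = 0 then (fR m p).coeff 0 else 0) else 0 := by
      by_cases hi : (i : ℕ) = 0
      · rw [if_pos hi, pderiv_mul, hprodX (Sum.inl s)]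
        have hs : s = 0 ∨ s = 1 := by omega
        have hf0 : (fR m p).coeff 0 = ∏ k : Fin (m + 2), p (Sum.inr k) := coeff_zero_prod_XC _ _
        rcases hs with hs | hs <;> subst hs <;>
          simp [Pi.single_apply, hi, hf0, map_prod]
      · rw [if_neg hi, if_neg hi, map_zero, map_zero]
        simp [if_neg hi]
    rw [hterm2]
    simp
  | inr k0 =>
    have hcol : (∑ o : Option (Fin (m + 2)), pderiv (Sum.inr k0) (β o)
          * (∏ o' ∈ Finset.univ.erase o, (Polynomial.X + Polynomial.C (β o'))).coeff i.val)
        = (∏ o' ∈ Finset.univ.erase (some k0),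
            (Polynomial.X + Polynomial.C (β o'))).coeff i.val := by
      rw [Finset.sum_eq_single (some k0)
        (fun o _ ho => ?_) (fun h => absurd (Finset.mem_univ _) h)]
      · rw [show pderiv (Sum.inr k0) (β (some k0)) = 1 from pderiv_X_self _, one_mul]
      · match o, ho with
        | none, _ =>
          rw [show pderiv (Sum.inr k0) (β none) = 0 by
            simp [hβ, Pi.single_apply], zero_mul]
        | some k, ho =>
          rw [show pderiv (Sum.inr k0) (β (some k)) = 0 from
            pderiv_X_of_ne (by simpa using ho), zero_mul]
    rw [hcol, eval_coeff, map_prod_XC, prod_erase_some_XC (fun o => eval p (β o)) k0]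
    have hmatch : (∏ j ∈ Finset.univ.erase k0,
        (Polynomial.X + Polynomial.C (eval p (β (some j))))) = gR m p k0 := by
      apply Finset.prod_congr rfl
      intro j _
      simp [hβ, gR]
    have hnone : eval p (β none) = p (Sum.inl 0) + p (Sum.inl 1) := by simp [hβ]
    rw [hmatch, hnone]
    have hterm2 : eval p (pderiv (Sum.inr k0)
        (if (i : ℕ) = 0
          then (X (Sum.inl 1) : MvPolynomial (CycIx m) ℝ) * ∏ k : Fin (m + 2), X (Sum.inr k)
          else 0))
        = if (i : ℕ) = 0 then p (Sum.inl 1) * (gR m p k0).coeff 0 else 0 := by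
      by_cases hi : (i : ℕ) = 0
      · rw [if_pos hi, if_pos hi, pderiv_mul, hprodX (Sum.inr k0)]
        rw [show pderiv (Sum.inr k0) (X (Sum.inl 1) : MvPolynomial (CycIx m) ℝ) = 0 from
          pderiv_X_of_ne (by simp), zero_mul, zero_add, map_mul, eval_X]
        simp [hg0 k0, map_prod]
      · rw [if_neg hi, if_neg hi, map_zero, map_zero]
    rw [hterm2]
    simp

end Entries

section Rank

lemma rank_eq_card_iff {α β : Type*} [Fintype α] [Fintype β] [DecidableEq β]
    (A : Matrix α β ℝ) : A.rank = Fintype.card β ↔ Function.Injective A.mulVecLin := by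
  rw [Matrix.rank, ← LinearMap.ker_eq_bot]
  have h := LinearMap.finrank_range_add_finrank_ker A.mulVecLin
  rw [Module.finrank_fintype_fun_eq_card] at h
  constructor
  · intro hr
    have h0 : Module.finrank ℝ (LinearMap.ker A.mulVecLin) = 0 := by omega
    exact Submodule.finrank_eq_zero.mp h0
  · intro hk
    rw [hk, finrank_bot] at h
    omega

lemma not_inj_of_eq_cols {α β : Type*} [Fintype α] [Fintype β] [DecidableEq β]
    (A : Matrix α β ℝ) (t1 t2 : β) (hne : t1 ≠ t2) (h : ∀ s, A s t1 = A s t2) :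
    ¬ Function.Injective A.mulVecLin := by
  intro hinj
  have h1 : (Pi.single t1 (1 : ℝ) : β → ℝ) = Pi.single t2 1 := by
    apply hinj
    ext s
    simp only [Matrix.mulVecLin_apply, Matrix.mulVec_single, mul_one]
    simpa using h s
  have := congrFun h1 t1
  rw [Pi.single_eq_same, Pi.single_eq_of_ne hne] at this
  exact one_ne_zero this

end Rank

section PolyFacts
variable (m : ℕ) (p : CycIx m → ℝ)

lemma gR_monic (k : Fin (m + 2)) : (gR m p k).Monic :=
  Polynomial.monic_prod_of_monic _ _ fun _ _ => Polynomial.monic_X_add_C _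

lemma fR_monic : (fR m p).Monic :=
  Polynomial.monic_prod_of_monic _ _ fun _ _ => Polynomial.monic_X_add_C _

lemma gR_natDegree (k : Fin (m + 2)) : (gR m p k).natDegree = m + 1 := by
  rw [gR, Polynomial.natDegree_prod _ _ (fun j _ => XC_ne_zero _)]
  simp [Polynomial.natDegree_X_add_C, Finset.card_erase_of_mem]

lemma fR_natDegree : (fR m p).natDegree = m + 2 := by
  rw [fR, Polynomial.natDegree_prod _ _ (fun j _ => XC_ne_zero _)]
  simp [Polynomial.natDegree_X_add_C]

lemma fR_coeff_top : (fR m p).coeff (m + 2) = 1 := by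
  have := (fR_monic m p).coeff_natDegree
  rwa [fR_natDegree] at this

lemma Xg_coeff_top (k : Fin (m + 2)) :
    ((Polynomial.X + Polynomial.C (p (Sum.inl 0) + p (Sum.inl 1))) * gR m p k).coeff (m + 2)
      = 1 := by
  have hm : ((Polynomial.X + Polynomial.C (p (Sum.inl 0) + p (Sum.inl 1))) * gR m p k).Monic :=
    (Polynomial.monic_X_add_C _).mul (gR_monic m p k)
  have hd := (Polynomial.monic_X_add_C (p (Sum.inl 0) + p (Sum.inl 1))).natDegree_mul
    (gR_monic m p k)
  rw [Polynomial.natDegree_X_add_C, gR_natDegree] at hd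
  have := hm.coeff_natDegree
  rw [hd] at this
  convert this using 2
  omega

lemma fR_coeff_zero : (fR m p).coeff 0 = ∏ k : Fin (m + 2), p (Sum.inr k) :=
  coeff_zero_prod_XC _ _

lemma gR_eval (k l : Fin (m + 2)) :
    (gR m p k).eval (-(p (Sum.inr l)))
      = ∏ j ∈ Finset.univ.erase k, (p (Sum.inr j) - p (Sum.inr l)) := by
  rw [gR, Polynomial.eval_prod]
  apply Finset.prod_congr rfl
  intro j _
  simp
  ring

lemma gR_congr {k1 k2 : Fin (m + 2)} (hne : k1 ≠ k2) (heq : p (Sum.inr k1) = p (Sum.inr k2)) :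
    gR m p k1 = gR m p k2 := by
  rw [gR, gR,
    ← Finset.mul_prod_erase (Finset.univ.erase k1) _
      (Finset.mem_erase.mpr ⟨hne.symm, Finset.mem_univ k2⟩),
    ← Finset.mul_prod_erase (Finset.univ.erase k2) _
      (Finset.mem_erase.mpr ⟨hne, Finset.mem_univ k1⟩),
    Finset.erase_right_comm, heq]

end PolyFacts

theorem cycJacAt_rank_iff (m : ℕ) (p : CycIx m → ℝ) :
    (cycJacAt m p).rank = m + 4 ↔
      ((∏ k : Fin (m + 2), p (Sum.inr k)) *
          ∏ q ∈ Finset.univ.filter (fun q : Fin (m + 2) × Fin (m + 2) => q.1 < q.2),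
            (p (Sum.inr q.1) - p (Sum.inr q.2))) ≠ 0 := by
  classical
  have hcard : Fintype.card (CycIx m) = m + 4 := by
    simp only [Fintype.card_sum, Fintype.card_fin]
    omega
  rw [show (m + 4 : ℕ) = Fintype.card (CycIx m) from hcard.symm, rank_eq_card_iff]
  constructor
  · intro hinj hzero
    rcases mul_eq_zero.mp hzero with h0 | hV
    · refine not_inj_of_eq_cols _ (Sum.inl 0) (Sum.inl 1) (by simp) ?_ hinj
      intro s
      cases s with
      | inl i =>
        rw [J_c, J_c]
        simp only [Sum.elim_inl]
        rw [fR_coeff_zero, h0]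
        norm_num
      | inr i =>
        rw [J_d, J_d]
        simp
    · obtain ⟨q, hq, hq0⟩ := Finset.prod_eq_zero_iff.mp hV
      have hlt : q.1 < q.2 := (Finset.mem_filter.mp hq).2
      have heq : p (Sum.inr q.1) = p (Sum.inr q.2) := sub_eq_zero.mp hq0
      have hne : q.1 ≠ q.2 := ne_of_lt hlt
      refine not_inj_of_eq_cols _ (Sum.inr q.1) (Sum.inr q.2) (by simp [hne]) ?_ hinj
      intro s
      cases s with
      | inl i =>
        rw [J_c, J_c]
        simp only [Sum.elim_inr]
        rw [gR_congr m p hne heq]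
      | inr i =>
        rw [J_d, J_d]
        simp only [Sum.elim_inr]
        rw [gR_congr m p hne heq]
  · intro hne
    have hprod : (∏ k : Fin (m + 2), p (Sum.inr k)) ≠ 0 := left_ne_zero_of_mul hne
    have hVdm := right_ne_zero_of_mul hne
    have hdist : ∀ k l : Fin (m + 2), k ≠ l → p (Sum.inr k) ≠ p (Sum.inr l) := by
      intro k l hkl heq
      rcases lt_or_gt_of_ne hkl with h | h
      · exact Finset.prod_ne_zero_iff.mp hVdm (k, l)
          (Finset.mem_filter.mpr ⟨Finset.mem_univ _, h⟩) (sub_eq_zero.mpr heq)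
      · exact Finset.prod_ne_zero_iff.mp hVdm (l, k)
          (Finset.mem_filter.mpr ⟨Finset.mem_univ _, h⟩) (sub_eq_zero.mpr heq.symm)
    rw [← LinearMap.ker_eq_bot, LinearMap.ker_eq_bot']
    intro v hv
    replace hv : ∀ s, ∑ t, cycJacAt m p s t * v t = 0 := by
      intro s
      have h := congrFun hv s
      rw [Matrix.mulVecLin_apply] at h
      simpa [Matrix.mulVec, dotProduct] using h
    have hvr : ∀ l, v (Sum.inr l) = 0 := by
      intro l
      have hrow : ∀ i : ℕ, i < m + 2 →
          ∑ k : Fin (m + 2), (gR m p k).coeff i * v (Sum.inr k) = 0 := by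
        intro i hi
        have h := hv (Sum.inr (⟨i, hi⟩ : Fin (m + 2)))
        rw [Fintype.sum_sum_type] at h
        simpa [J_d] using h
      have hsum : ∑ k : Fin (m + 2),
          (gR m p k).eval (-(p (Sum.inr l))) * v (Sum.inr k) = 0 := by
        have hev : ∀ k : Fin (m + 2), (gR m p k).eval (-(p (Sum.inr l)))
            = ∑ i ∈ Finset.range (m + 2), (gR m p k).coeff i * (-(p (Sum.inr l))) ^ i :=
          fun k => Polynomial.eval_eq_sum_range' (by rw [gR_natDegree]; omega) _
        calc ∑ k : Fin (m + 2), (gR m p k).eval (-(p (Sum.inr l))) * v (Sum.inr k)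
            = ∑ k : Fin (m + 2), ∑ i ∈ Finset.range (m + 2),
                ((-(p (Sum.inr l))) ^ i * ((gR m p k).coeff i * v (Sum.inr k))) := by
              apply Finset.sum_congr rfl
              intro k _
              rw [hev k, Finset.sum_mul]
              apply Finset.sum_congr rfl
              intro i _
              ring
          _ = ∑ i ∈ Finset.range (m + 2), (-(p (Sum.inr l))) ^ i
                * ∑ k : Fin (m + 2), (gR m p k).coeff i * v (Sum.inr k) := by
              rw [Finset.sum_comm]
              apply Finset.sum_congr rfl
              intro i _
              rw [Finset.mul_sum]
          _ = 0 := by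
              apply Finset.sum_eq_zero
              intro i hi
              rw [hrow i (Finset.mem_range.mp hi), mul_zero]
      rw [Finset.sum_eq_single l (fun k _ hkl => by
          rw [gR_eval,
            Finset.prod_eq_zero (Finset.mem_erase.mpr ⟨Ne.symm hkl, Finset.mem_univ l⟩)
              (show p (Sum.inr l) - p (Sum.inr l) = 0 from sub_self _), zero_mul])
        (fun h => absurd (Finset.mem_univ l) h)] at hsum
      have hne0 : (gR m p l).eval (-(p (Sum.inr l))) ≠ 0 := by
        rw [gR_eval]
        exact Finset.prod_ne_zero_iff.mpr fun j hj =>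
          sub_ne_zero.mpr (hdist j l (Finset.mem_erase.mp hj).1)
      exact (mul_eq_zero.mp hsum).resolve_left hne0
    have hv0 : v (Sum.inl 0) = 0 := by
      have h := hv (Sum.inl (0 : Fin (m + 3)))
      rw [Fintype.sum_sum_type, Fin.sum_univ_two] at h
      simp only [J_c, Sum.elim_inl, Sum.elim_inr, hvr, mul_zero, Finset.sum_const_zero,
        add_zero] at h
      norm_num at h
      have hfc : (fR m p).coeff 0 ≠ 0 := by
        rw [fR_coeff_zero]; exact hprod
      exact h.resolve_left hfc
    have hv1 : v (Sum.inl 1) = 0 := by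
      have h := hv (Sum.inl (Fin.last (m + 2)))
      rw [Fintype.sum_sum_type, Fin.sum_univ_two] at h
      simp only [J_c, Sum.elim_inl, Sum.elim_inr] at h
      rw [show ((Fin.last (m + 2) : Fin (m + 3)) : ℕ) = m + 2 from rfl] at h
      simp only [hvr, mul_zero, Finset.sum_const_zero, add_zero, fR_coeff_top, hv0] at h
      rw [if_pos (show ((1 : Fin 2) : ℕ) = 1 from rfl), if_neg (by omega : ¬(m + 2 = 0))] at h
      simpa using h
    funext t
    cases t with
    | inl s =>
      have hs : s = 0 ∨ s = 1 := by omega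
      rcases hs with hs | hs <;> subst hs <;> simpa [hv0] using hv1
    | inr k => exact hvr k
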